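/- For all real x and all real y > 0, the imaginary part of the complex error function at z = x + iy satisfies Im[w(x + iy)] = (1/π) ∫_{−∞}^{∞} (x − t) e^{−t²}/(y² + (x − t)²) dt. -/

import Mathlib

open Real MeasureTheory

/-- The complex error function (Faddeeva function):
`w(z) = e^{−z²}(1 + (2i/√π)∫₀^z e^{t²} dt)`, the integral taken along the
straight-line segment from `0` to `z`. -/
noncomputable def faddeeva (z : ℂ) : ℂ :=
  Complex.exp (-z ^ 2) *
    (1 + (2 * Complex.I / (Real.sqrt Real.pi : ℂ)) *
      (z * ∫ s in (0:ℝ)..1, Complex.exp (((s : ℂ) * z) ^ 2)))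

section AuxFaddeeva

open Set Filter Complex

open scoped Topology

noncomputable def gFadd (z : ℂ) : ℂ :=
  ∫ s in Set.Ioi (0:ℝ), Complex.exp (Complex.I * z * s - (s:ℂ)^2/4)

lemma re_aux (z : ℂ) (s : ℝ) :
    (Complex.I * z * s - (s:ℂ)^2/4).re = -z.im * s - s^2/4 := by
  have h4 : (s:ℂ)^2/4 = ((s^2/4 : ℝ) : ℂ) := by push_cast; ring
  rw [h4, Complex.sub_re, Complex.ofReal_re]
  simp [Complex.mul_re, Complex.mul_im]

lemma norm_exp_aux (z : ℂ) (s : ℝ) :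
    ‖Complex.exp (Complex.I * z * s - (s:ℂ)^2/4)‖ = Real.exp (-z.im * s - s^2/4) := by
  rw [Complex.norm_exp, re_aux]

lemma intF (z : ℂ) :
    Integrable (fun s : ℝ => Complex.exp (Complex.I * z * s - (s:ℂ)^2/4)) := by
  have h := integrable_cexp_quadratic (b := (1/4 : ℂ)) (by norm_num) (Complex.I * z) 0
  simpa only [show ∀ x : ℝ, -(1/4:ℂ) * (x:ℂ)^2 + (Complex.I*z) * (x:ℂ) + 0
      = Complex.I * z * x - (x:ℂ)^2/4 from fun x => by ring] using h

lemma intBound (c : ℝ) : Integrable (fun s : ℝ => Real.exp (c * s - s^2/4)) := by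
  have h := (integrable_cexp_quadratic (b := (1/4 : ℂ)) (by norm_num) (c:ℂ) 0).norm
  have he : ∀ s : ℝ, ‖Complex.exp (-(1/4:ℂ) * (s:ℂ)^2 + (c:ℂ) * s + 0)‖
      = Real.exp (c * s - s^2/4) := by
    intro s
    rw [Complex.norm_exp]
    congr 1
    have : -(1/4:ℂ) * (s:ℂ)^2 + (c:ℂ) * s + 0 = ((c * s - s^2/4 : ℝ) : ℂ) := by
      push_cast; ring
    rw [this, Complex.ofReal_re]
  simpa only [he] using h

lemma intsF (z : ℂ) :
    IntegrableOn (fun s : ℝ => (s:ℂ) * Complex.exp (Complex.I * z * s - (s:ℂ)^2/4))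
      (Ioi (0:ℝ)) := by
  refine Integrable.mono' ((intBound (-z.im + 1)).integrableOn) ?_ ?_
  · exact (Complex.continuous_ofReal.mul
      (Complex.continuous_exp.comp (by continuity))).aestronglyMeasurable
  · filter_upwards [ae_restrict_mem measurableSet_Ioi] with s hs
    rw [norm_mul, norm_exp_aux, Complex.norm_real, Real.norm_eq_abs,
      abs_of_pos (by exact hs)]
    have h1 : s ≤ Real.exp s := by linarith [Real.add_one_le_exp s]
    calc s * Real.exp (-z.im * s - s^2/4)
        ≤ Real.exp s * Real.exp (-z.im * s - s^2/4) := by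
          exact mul_le_mul_of_nonneg_right h1 (Real.exp_nonneg _)
      _ = Real.exp ((-z.im + 1) * s - s^2/4) := by
          rw [← Real.exp_add]; ring_nf

lemma hasDerivAt_exp_aux (z : ℂ) (s : ℝ) :
    HasDerivAt (fun s : ℝ => Complex.exp (Complex.I * z * s - (s:ℂ)^2/4))
      ((Complex.I * z - s/2) * Complex.exp (Complex.I * z * s - (s:ℂ)^2/4)) s := by
  have hp : HasDerivAt (fun w : ℂ => Complex.I * z * w - w^2/4)
      (Complex.I * z - (s:ℂ)/2) (s:ℂ) := by
    have h := ((hasDerivAt_id (s:ℂ)).const_mul (Complex.I * z)).sub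
      ((hasDerivAt_pow 2 (s:ℂ)).div_const 4)
    refine HasDerivAt.congr_deriv h ?_
    simp
    ring
  have h2 := hp.cexp.comp_ofReal
  convert h2 using 1
  ring

lemma tendsto_exp_aux (z : ℂ) :
    Tendsto (fun s : ℝ => Complex.exp (Complex.I * z * s - (s:ℂ)^2/4)) atTop (nhds 0) := by
  rw [tendsto_zero_iff_norm_tendsto_zero]
  simp only [norm_exp_aux]
  apply Real.tendsto_exp_atBot.comp
  have h2 : Tendsto (fun s : ℝ => s/2 + z.im) atTop atTop :=
    tendsto_atTop_add_const_right _ _ (tendsto_id.atTop_div_const two_pos)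
  have h3 : Tendsto (fun s : ℝ => (s/2 + z.im)^2 - z.im^2) atTop atTop := by
    apply tendsto_atTop_add_const_right
    simpa [pow_two] using h2.atTop_mul_atTop₀ h2
  have h4 := tendsto_neg_atTop_atBot.comp h3
  convert h4 using 2 with s
  simp only [Function.comp_apply]
  ring

lemma ibp_aux (z : ℂ) :
    ∫ s in Ioi (0:ℝ), (Complex.I * z - (s:ℂ)/2)
      * Complex.exp (Complex.I * z * s - (s:ℂ)^2/4) = -1 := by
  have hint : IntegrableOn (fun s : ℝ => (Complex.I * z - (s:ℂ)/2)
      * Complex.exp (Complex.I * z * s - (s:ℂ)^2/4)) (Ioi (0:ℝ)) := by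
    have heq : (fun s : ℝ => (Complex.I * z - (s:ℂ)/2)
        * Complex.exp (Complex.I * z * s - (s:ℂ)^2/4))
        = fun s : ℝ => (Complex.I * z) * Complex.exp (Complex.I * z * s - (s:ℂ)^2/4)
          - (1/2 : ℂ) * ((s:ℂ) * Complex.exp (Complex.I * z * s - (s:ℂ)^2/4)) := by
      funext s; ring
    rw [heq]
    exact ((intF z).integrableOn.const_mul _).sub ((intsF z).const_mul _)
  have h := integral_Ioi_of_hasDerivAt_of_tendsto
    (a := (0:ℝ))
    (f := fun s : ℝ => Complex.exp (Complex.I * z * s - (s:ℂ)^2/4))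
    (Continuous.continuousWithinAt (by
      exact Complex.continuous_exp.comp (by continuity)))
    (fun s _ => hasDerivAt_exp_aux z s) hint (tendsto_exp_aux z)
  rw [h]
  simp

lemma hasDerivAt_gFadd (z : ℂ) :
    HasDerivAt gFadd (2 * Complex.I - 2 * z * gFadd z) z := by
  have key := hasDerivAt_integral_of_dominated_loc_of_deriv_le
    (μ := volume.restrict (Ioi (0:ℝ)))
    (F := fun (w : ℂ) (s : ℝ) => Complex.exp (Complex.I * w * s - (s:ℂ)^2/4))
    (F' := fun (w : ℂ) (s : ℝ) =>
      Complex.I * s * Complex.exp (Complex.I * w * s - (s:ℂ)^2/4))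
    (x₀ := z) (s := Metric.ball z 1)
    (bound := fun s => Real.exp ((|z.im| + 2) * s - s^2/4))
    (Metric.ball_mem_nhds z one_pos)
    (Eventually.of_forall fun w =>
      (Complex.continuous_exp.comp (by continuity)).aestronglyMeasurable)
    (intF z).integrableOn
    ((continuous_const.mul Complex.continuous_ofReal |>.mul
      (Complex.continuous_exp.comp (by continuity))).aestronglyMeasurable)
    ?_ ((intBound _).integrableOn) ?_
  · obtain ⟨-, hd⟩ := key
    have hval : (∫ s in Ioi (0:ℝ),
        Complex.I * s * Complex.exp (Complex.I * z * s - (s:ℂ)^2/4))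
        = 2 * Complex.I - 2 * z * gFadd z := by
      have hsplit := ibp_aux z
      have heq : (fun s : ℝ => (Complex.I * z - (s:ℂ)/2)
          * Complex.exp (Complex.I * z * s - (s:ℂ)^2/4))
          = fun s : ℝ => (Complex.I * z) * Complex.exp (Complex.I * z * s - (s:ℂ)^2/4)
            - (1/2 : ℂ) * ((s:ℂ) * Complex.exp (Complex.I * z * s - (s:ℂ)^2/4)) := by
        funext s; ring
      rw [heq, integral_sub (((intF z).integrableOn).const_mul _)
        ((intsF z).const_mul _), integral_const_mul, integral_const_mul] at hsplit
      have hG : (∫ s in Ioi (0:ℝ), Complex.exp (Complex.I * z * s - (s:ℂ)^2/4))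
          = gFadd z := rfl
      rw [hG] at hsplit
      have hpull : (∫ s in Ioi (0:ℝ),
          Complex.I * s * Complex.exp (Complex.I * z * s - (s:ℂ)^2/4))
          = Complex.I * ∫ s in Ioi (0:ℝ),
            (s:ℂ) * Complex.exp (Complex.I * z * s - (s:ℂ)^2/4) := by
        rw [← integral_const_mul]
        congr 1; funext s; ring
      rw [hpull]
      linear_combination (-2 * Complex.I) * hsplit + (2 * z * gFadd z) * Complex.I_sq
    rw [hval] at hd
    exact hd
  · -- bound
    filter_upwards [ae_restrict_mem measurableSet_Ioi] with s hs w hw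
    rw [norm_mul, norm_mul, norm_exp_aux, Complex.norm_I, Complex.norm_real,
      Real.norm_eq_abs, abs_of_pos (show (0:ℝ) < s from hs), one_mul]
    have him : -w.im ≤ |z.im| + 1 := by
      have h1 : |w.im - z.im| ≤ ‖w - z‖ := by
        simpa using Complex.abs_im_le_norm (w - z)
      have h2 : ‖w - z‖ < 1 := by
        rw [Metric.mem_ball, Complex.dist_eq] at hw; exact hw
      have h3 := abs_le.1 (h1.trans h2.le)
      cases' abs_cases z.im with h h <;> [skip; skip] <;> linarith [h3.1, h3.2]
    have h1 : s ≤ Real.exp s := by linarith [Real.add_one_le_exp s]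
    calc s * Real.exp (-w.im * s - s^2/4)
        ≤ Real.exp s * Real.exp ((|z.im| + 1) * s - s^2/4) := by
          apply mul_le_mul h1 _ (Real.exp_nonneg _) (Real.exp_nonneg _)
          apply Real.exp_le_exp.2
          have : -w.im * s ≤ (|z.im| + 1) * s :=
            mul_le_mul_of_nonneg_right him (le_of_lt hs)
          linarith
      _ = Real.exp ((|z.im| + 2) * s - s^2/4) := by
          rw [← Real.exp_add]; ring_nf
  · -- differentiability
    refine Eventually.of_forall fun s w _ => ?_
    have hp : HasDerivAt (fun w : ℂ => Complex.I * w * (s:ℂ) - (s:ℂ)^2/4)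
        (Complex.I * (s:ℂ)) w := by
      have h := (((hasDerivAt_id w).const_mul Complex.I).mul_const
        ((s:ℂ))).sub_const ((s:ℂ)^2/4)
      simpa using h
    have h2 := hp.cexp
    refine HasDerivAt.congr_deriv h2 ?_
    ring

lemma gFadd_zero : gFadd 0 = Real.sqrt Real.pi := by
  unfold gFadd
  have h : ∀ s : ℝ, Complex.exp (Complex.I * 0 * s - (s:ℂ)^2/4)
      = ((Real.exp (-(1/4) * s^2) : ℝ) : ℂ) := by
    intro s
    rw [Complex.ofReal_exp]
    congr 1
    push_cast
    ring
  simp_rw [h]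
  have hoR : (∫ s in Ioi (0:ℝ), ((Real.exp (-(1/4) * s^2) : ℝ) : ℂ))
      = ((∫ s in Ioi (0:ℝ), Real.exp (-(1/4) * s^2) : ℝ) : ℂ) := integral_ofReal
  rw [hoR, integral_gaussian_Ioi]
  norm_cast
  rw [show Real.pi / (1/4) = 4 * Real.pi by ring,
    Real.sqrt_mul (by norm_num : (0:ℝ) ≤ 4),
    show Real.sqrt 4 = 2 by
      rw [show (4:ℝ) = 2^2 by norm_num, Real.sqrt_sq (by norm_num : (0:ℝ) ≤ 2)]]
  ring

lemma gFadd_eq (z : ℂ) : gFadd z = Real.sqrt Real.pi * faddeeva z := by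
  have hψ : ∀ w : ℂ, HasDerivAt (fun w : ℂ => Complex.exp (w^2) * gFadd w)
      (2 * Complex.I * Complex.exp (w^2)) w := by
    intro w
    have h1 : HasDerivAt (fun w : ℂ => Complex.exp (w^2)) (2 * w * Complex.exp (w^2)) w := by
      have := (hasDerivAt_pow 2 w).cexp
      refine HasDerivAt.congr_deriv this ?_
      ring
    have h2 := h1.mul (hasDerivAt_gFadd w)
    refine HasDerivAt.congr_deriv h2 ?_
    ring
  have hφ : ∀ u : ℝ, HasDerivAt (fun u : ℝ => Complex.exp (((u:ℂ) * z)^2) * gFadd ((u:ℂ) * z))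
      (2 * Complex.I * z * Complex.exp (((u:ℂ) * z)^2)) u := by
    intro u
    have h2 : HasDerivAt (fun w : ℂ => Complex.exp ((w * z)^2) * gFadd (w * z))
        (2 * Complex.I * Complex.exp (((u:ℂ) * z)^2) * z) ((u:ℂ)) := by
      have := (hψ ((u:ℂ) * z)).comp ((u:ℂ)) ((hasDerivAt_id ((u:ℂ))).mul_const z)
      exact this.congr_deriv (by rw [one_mul])
    have h3 := h2.comp_ofReal
    convert h3 using 1
    ring
  have hFTC := intervalIntegral.integral_eq_sub_of_hasDerivAt (a := (0:ℝ)) (b := (1:ℝ))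
    (f := fun u : ℝ => Complex.exp (((u:ℂ) * z)^2) * gFadd ((u:ℂ) * z))
    (fun u _ => hφ u)
    (by
      apply Continuous.intervalIntegrable
      exact continuous_const.mul (Complex.continuous_exp.comp (by continuity)))
  have hpull : (∫ u in (0:ℝ)..1, 2 * Complex.I * z * Complex.exp (((u:ℂ) * z)^2))
      = 2 * Complex.I * z * ∫ u in (0:ℝ)..1, Complex.exp (((u:ℂ) * z)^2) :=
    intervalIntegral.integral_const_mul _ _
  rw [hpull] at hFTC
  simp only [Complex.ofReal_one, Complex.ofReal_zero, one_mul, zero_mul,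
    ne_eq, OfNat.ofNat_ne_zero, not_false_eq_true, zero_pow, Complex.exp_zero,
    two_ne_zero] at hFTC
  rw [gFadd_zero] at hFTC
  -- hFTC : 2 I z ∫ = exp(z²) * gFadd z - √π
  have hs : ((Real.sqrt Real.pi : ℝ) : ℂ) ≠ 0 := by
    simp only [ne_eq, Complex.ofReal_eq_zero]
    positivity
  have hE : Complex.exp (z^2) ≠ 0 := Complex.exp_ne_zero _
  apply mul_left_cancel₀ hE
  unfold faddeeva
  rw [show -z^2 = -(z^2) by ring, Complex.exp_neg]
  set J := ∫ s in (0:ℝ)..1, Complex.exp (((s : ℂ) * z) ^ 2) with hJ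
  field_simp
  linear_combination (-1 : ℂ) * hFTC

lemma inner_int (a : ℂ) (ha : 0 < a.im) :
    ∫ s in Ioi (0:ℝ), Complex.exp (Complex.I * a * s) = Complex.I / a := by
  have ha0 : a ≠ 0 := by
    intro h; rw [h] at ha; simp at ha
  have hIa : Complex.I * a ≠ 0 := mul_ne_zero Complex.I_ne_zero ha0
  have hre : ∀ s : ℝ, (Complex.I * a * (s:ℂ)).re = -a.im * s := by
    intro s; simp [Complex.mul_re, Complex.mul_im]
  have hder : ∀ s : ℝ, HasDerivAt
      (fun s : ℝ => (Complex.I * a)⁻¹ * Complex.exp (Complex.I * a * s))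
      (Complex.exp (Complex.I * a * s)) s := by
    intro s
    have h0 : HasDerivAt (fun w : ℂ => Complex.I * a * w) (Complex.I * a) (s:ℂ) := by
      simpa using (hasDerivAt_id ((s:ℂ))).const_mul (Complex.I * a)
    have hp := h0.cexp.comp_ofReal
    have h2 := hp.const_mul ((Complex.I * a)⁻¹)
    refine HasDerivAt.congr_deriv h2 ?_
    field_simp
  have hc : Continuous (fun s : ℝ => (Complex.I * a)⁻¹ * Complex.exp (Complex.I * a * s)) :=
    continuous_const.mul (Complex.continuous_exp.comp (by continuity))
  have hint : IntegrableOn (fun s : ℝ => Complex.exp (Complex.I * a * s)) (Ioi (0:ℝ)) := by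
    refine Integrable.mono' (exp_neg_integrableOn_Ioi 0 ha) ?_ ?_
    · exact (Complex.continuous_exp.comp (by continuity)).aestronglyMeasurable
    · filter_upwards with s
      rw [Complex.norm_exp, hre]
  have ht : Tendsto (fun s : ℝ => (Complex.I * a)⁻¹ * Complex.exp (Complex.I * a * s))
      atTop (nhds 0) := by
    rw [tendsto_zero_iff_norm_tendsto_zero]
    have hn : ∀ s : ℝ, ‖(Complex.I * a)⁻¹ * Complex.exp (Complex.I * a * s)‖
        = ‖(Complex.I * a)⁻¹‖ * Real.exp (-a.im * s) := by
      intro s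
      rw [norm_mul, Complex.norm_exp, hre]
    simp_rw [hn]
    rw [show (0:ℝ) = ‖(Complex.I * a)⁻¹‖ * 0 by ring]
    apply Tendsto.const_mul
    apply Real.tendsto_exp_atBot.comp
    exact Filter.Tendsto.const_mul_atTop_of_neg (show -a.im < 0 by linarith) tendsto_id
  have h := integral_Ioi_of_hasDerivAt_of_tendsto
    hc.continuousWithinAt (fun s _ => hder s) hint ht
  rw [h]
  simp only [Complex.ofReal_zero, mul_zero, Complex.exp_zero, mul_one, zero_sub]
  rw [mul_inv, Complex.inv_I]
  field_simp

lemma fubini_step (z : ℂ) (hy : 0 < z.im) :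
    ∫ t : ℝ, Complex.exp (-(t:ℂ)^2) * (Complex.I / (z - t))
      = ((Real.sqrt Real.pi : ℝ) : ℂ) * gFadd z := by
  have h1 : ∀ t : ℝ, Complex.exp (-(t:ℂ)^2) * (Complex.I / (z - t))
      = ∫ s in Ioi (0:ℝ), Complex.exp (-(t:ℂ)^2 + Complex.I * (z - t) * s) := by
    intro t
    rw [← inner_int (z - t) (by simpa using hy), ← integral_const_mul]
    congr 1; funext s; rw [← Complex.exp_add]
  have hb : Integrable (fun p : ℝ × ℝ => Real.exp (-p.1^2) * Real.exp (-z.im * p.2))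
      (volume.prod (volume.restrict (Ioi 0))) :=
    Integrable.mul_prod
      (by simpa using integrable_exp_neg_mul_sq (show (0:ℝ) < 1 by norm_num))
      (exp_neg_integrableOn_Ioi 0 hy)
  have hInt : Integrable (fun p : ℝ × ℝ =>
      Complex.exp (-(p.1:ℂ)^2 + Complex.I * (z - p.1) * p.2))
      (volume.prod (volume.restrict (Ioi 0))) := by
    refine Integrable.mono' hb ?_ ?_
    · apply Continuous.aestronglyMeasurable
      exact Complex.continuous_exp.comp (by continuity)
    · filter_upwards with p
      rw [Complex.norm_exp, ← Real.exp_add]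
      apply le_of_eq
      congr 1
      simp [Complex.mul_re, Complex.mul_im, ← Complex.ofReal_pow]
  have hswap := integral_integral_swap (f := fun (t : ℝ) (s : ℝ) =>
    Complex.exp (-(t:ℂ)^2 + Complex.I * (z - t) * s)) (by exact hInt)
  simp_rw [h1]
  rw [hswap]
  have h2 : ∀ s : ℝ, (∫ t : ℝ, Complex.exp (-(t:ℂ)^2 + Complex.I * (z - t) * s))
      = ((Real.sqrt Real.pi : ℝ) : ℂ) * Complex.exp (Complex.I * z * s - (s:ℂ)^2/4) := by
    intro s
    have he : ∀ t : ℝ, Complex.exp (-(t:ℂ)^2 + Complex.I * (z - t) * s)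
        = Complex.exp (Complex.I * z * (s:ℂ))
          * (Complex.exp (Complex.I * (-(s:ℂ)) * t) * Complex.exp (-(1:ℂ) * (t:ℂ)^2)) := by
      intro t
      rw [← Complex.exp_add, ← Complex.exp_add]
      congr 1; ring
    simp_rw [he, integral_const_mul]
    rw [fourierIntegral_gaussian (by simp : (0:ℝ) < (1:ℂ).re) (-(s:ℂ))]
    have hπ : ((Real.pi : ℂ)/1)^(1/2 : ℂ) = ((Real.sqrt Real.pi : ℝ) : ℂ) := by
      rw [div_one, Real.sqrt_eq_rpow, Complex.ofReal_cpow Real.pi_pos.le]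
      norm_num
    rw [hπ, show -(-(s:ℂ))^2/(4*1) = -(s:ℂ)^2/4 by ring,
      show Complex.I * z * (s:ℂ) - (s:ℂ)^2/4 = Complex.I * z * (s:ℂ) + -(s:ℂ)^2/4 by ring,
      Complex.exp_add]
    ring
  simp_rw [h2]
  rw [integral_const_mul]
  rfl

end AuxFaddeeva

/-- For all real `x` and real `y > 0`, the imaginary part of the complex error
function at `z = x + iy` satisfies
`Im[w(x + iy)] = (1/π) ∫_{−∞}^{∞} (x − t) e^{−t²}/(y² + (x − t)²) dt`. -/
theorem im_faddeeva_eq (x y : ℝ) (hy : 0 < y) :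
    (faddeeva ((x : ℂ) + Complex.I * (y : ℂ))).im =
      (1 / Real.pi) *
        ∫ t : ℝ, (x - t) * Real.exp (-t ^ 2) / (y ^ 2 + (x - t) ^ 2) := by
  set z : ℂ := (x : ℂ) + Complex.I * (y : ℂ) with hz
  have hzim : z.im = y := by simp [hz]
  have hintc : Integrable (fun t : ℝ => Complex.exp (-(t:ℂ)^2) * (Complex.I / (z - t))) := by
    have hbint : Integrable (fun t : ℝ => Real.exp (-t^2) * y⁻¹) :=
      (by simpa using integrable_exp_neg_mul_sq (show (0:ℝ) < 1 by norm_num)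
        : Integrable (fun t : ℝ => Real.exp (-t^2))).mul_const _
    have hne : ∀ t : ℝ, z - (t:ℂ) ≠ 0 := by
      intro t h
      have h2 : (z - (t:ℂ)).im = 0 := by rw [h]; simp
      rw [show (z - (t:ℂ)).im = y by simp [hz]] at h2
      exact hy.ne' h2
    refine Integrable.mono' hbint ?_ ?_
    · apply Continuous.aestronglyMeasurable
      apply Continuous.mul (Complex.continuous_exp.comp (by continuity))
      exact Continuous.div continuous_const
        (continuous_const.sub Complex.continuous_ofReal) hne
    · filter_upwards with t
      rw [norm_mul]
      have h1 : ‖Complex.exp (-(t:ℂ)^2)‖ = Real.exp (-t^2) := by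
        rw [show -(t:ℂ)^2 = ((-t^2 : ℝ) : ℂ) by push_cast; ring, ← Complex.ofReal_exp,
          Complex.norm_real, Real.norm_eq_abs, abs_of_pos (Real.exp_pos _)]
      have h2 : ‖Complex.I / (z - t)‖ ≤ y⁻¹ := by
        rw [norm_div, Complex.norm_I]
        rw [show (1:ℝ)/‖z - t‖ = (‖z - t‖)⁻¹ from one_div _]
        apply inv_anti₀ hy
        calc y = |(z - (t:ℂ)).im| := by rw [show (z - (t:ℂ)).im = y by simp [hz],
              abs_of_pos hy]
          _ ≤ ‖z - t‖ := Complex.abs_im_le_norm _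
      calc ‖Complex.exp (-(t:ℂ)^2)‖ * ‖Complex.I / (z - t)‖
          ≤ Real.exp (-t^2) * y⁻¹ := by
            rw [h1]
            exact mul_le_mul_of_nonneg_left h2 (Real.exp_nonneg _)
        _ = Real.exp (-t^2) * y⁻¹ := rfl
  have him : ∀ t : ℝ, (Complex.exp (-(t:ℂ)^2) * (Complex.I / (z - t))).im
      = (x - t) * Real.exp (-t^2) / (y^2 + (x - t)^2) := by
    intro t
    have hre2 : (z - (t:ℂ)).re = x - t := by simp [hz]
    have him2 : (z - (t:ℂ)).im = y := by simp [hz]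
    rw [show -(t:ℂ)^2 = ((-t^2 : ℝ) : ℂ) by push_cast; ring, ← Complex.ofReal_exp]
    rw [Complex.mul_im, Complex.ofReal_re, Complex.ofReal_im]
    rw [Complex.div_im, Complex.normSq_apply, hre2, him2, Complex.I_re, Complex.I_im]
    rw [show (x - t) * (x - t) + y * y = y^2 + (x - t)^2 by ring]
    ring
  have hIm : (∫ t : ℝ, (x - t) * Real.exp (-t^2) / (y^2 + (x - t)^2))
      = (∫ t : ℝ, Complex.exp (-(t:ℂ)^2) * (Complex.I / (z - t))).im := by
    have h := ContinuousLinearMap.integral_comp_comm Complex.imCLM hintc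
    simp only [Complex.imCLM_apply] at h
    rw [← h]
    exact integral_congr_ae (Filter.Eventually.of_forall fun t => (him t).symm)
  rw [hIm, fubini_step z (by rw [hzim]; exact hy), gFadd_eq]
  rw [show ((Real.sqrt Real.pi : ℝ):ℂ) * (((Real.sqrt Real.pi : ℝ):ℂ) * faddeeva z)
      = ((Real.pi : ℝ):ℂ) * faddeeva z by
    rw [← mul_assoc, ← Complex.ofReal_mul, Real.mul_self_sqrt Real.pi_pos.le]]
  rw [show (((Real.pi : ℝ):ℂ) * faddeeva z).im = Real.pi * (faddeeva z).im by
    rw [Complex.mul_im, Complex.ofReal_re, Complex.ofReal_im]; ring]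
  rw [← mul_assoc]
  rw [one_div, inv_mul_cancel₀ Real.pi_ne_zero, one_mul]
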